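/- Let N ≥ 3, let ν ≥ 1 be an integer, and let f : ℝ^N → ℝ be a smooth scalar field such that lim_{R→∞} R^{N−2} ∫_{S^{N-1}} f(Rσ)² dσ = 0 and such that the integrals ∫_{ℝ^N}(∂_r f)² dx and ∫_{ℝ^N} |x|^{−2} f² dx are finite. Then ∫_{ℝ^N} (∂_r(|x|^{−ν} f))² |x|^{2ν} dx = ∫_{ℝ^N} ((∂_r f)² + ν(ν+N−2)|x|^{−2} f²) dx, where ∂_r g(x) = (x/|x|)·∇g(x) denotes the radial derivative. -/

import Mathlib

open MeasureTheory Metric Filter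

noncomputable section

/-- `|∇f|² = Σ_k (∂f/∂x_k)²` for a scalar field on `ℝ^N`. -/
def gradSqS {N : ℕ} (f : EuclideanSpace ℝ (Fin N) → ℝ)
    (x : EuclideanSpace ℝ (Fin N)) : ℝ :=
  ∑ k, (fderiv ℝ f x (EuclideanSpace.single k 1)) ^ 2

/-- The standard surface measure on the unit sphere `S^{N-1} ⊂ ℝ^N`. -/
def sphereMeasure (N : ℕ) : Measure (sphere (0 : EuclideanSpace ℝ (Fin N)) 1) :=
  (volume : Measure (EuclideanSpace ℝ (Fin N))).toSphere

/-- The radial derivative `∂_r f(x) = (x/|x|)·∇f(x)`. -/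
def radDeriv {N : ℕ} (f : EuclideanSpace ℝ (Fin N) → ℝ)
    (x : EuclideanSpace ℝ (Fin N)) : ℝ :=
  fderiv ℝ f x (‖x‖⁻¹ • x)

open Set
open scoped NNReal ENNReal

section helpers

lemma integrable_comap_val_iff {α : Type*} [MeasurableSpace α] {μ : Measure α} {s : Set α}
    (hs : MeasurableSet s) {F : α → ℝ} (hF : AEStronglyMeasurable F (μ.restrict s)) :
    Integrable (fun x : s => F x) (μ.comap Subtype.val) ↔ IntegrableOn F s μ := by
  rw [IntegrableOn, ← map_comap_subtype_coe hs,
    integrable_map_measure (by rwa [map_comap_subtype_coe hs]) measurable_subtype_coe.aemeasurable]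
  exact Iff.rfl

lemma polar_aux {N : ℕ} (hN : 3 ≤ N) {g : EuclideanSpace ℝ (Fin N) → ℝ} (hgm : Measurable g)
    (hgi : Integrable g (volume : Measure (EuclideanSpace ℝ (Fin N)))) :
    (∫ x, g x) = (∫ r in Set.Ioi (0:ℝ), r ^ (N - 1) *
        ∫ σ : sphere (0 : EuclideanSpace ℝ (Fin N)) 1, g (r • (σ : EuclideanSpace ℝ (Fin N)))
          ∂(sphereMeasure N))
    ∧ IntegrableOn (fun r : ℝ => r ^ (N - 1) *
        ∫ σ : sphere (0 : EuclideanSpace ℝ (Fin N)) 1, g (r • (σ : EuclideanSpace ℝ (Fin N)))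
          ∂(sphereMeasure N)) (Set.Ioi (0:ℝ)) := by
  haveI : Nonempty (Fin N) := ⟨⟨0, by omega⟩⟩
  have hdim : Module.finrank ℝ (EuclideanSpace ℝ (Fin N)) = N := finrank_euclideanSpace_fin
  set n : ℕ := Module.finrank ℝ (EuclideanSpace ℝ (Fin N)) - 1 with hn
  haveI : IsFiniteMeasure (sphereMeasure N) :=
    (inferInstance : IsFiniteMeasure ((volume : Measure (EuclideanSpace ℝ (Fin N))).toSphere))
  set gt : sphere (0 : EuclideanSpace ℝ (Fin N)) 1 × Ioi (0:ℝ) → ℝ :=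
    fun p => g ((p.2 : ℝ) • (p.1 : EuclideanSpace ℝ (Fin N))) with hgt
  set Φ : ℝ → ℝ := fun r =>
    ∫ σ : sphere (0 : EuclideanSpace ℝ (Fin N)) 1, g (r • (σ : EuclideanSpace ℝ (Fin N)))
      ∂(sphereMeasure N) with hΦ
  have hΦm : StronglyMeasurable Φ := by
    have hu : StronglyMeasurable (Function.uncurry
        fun (r : ℝ) (σ : sphere (0 : EuclideanSpace ℝ (Fin N)) 1) =>
          g (r • (σ : EuclideanSpace ℝ (Fin N)))) := by
      refine Measurable.stronglyMeasurable ?_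
      exact hgm.comp ((continuous_fst.smul (continuous_subtype_val.comp continuous_snd)).measurable)
    exact hu.integral_prod_right
  have hkey : ∀ x : ({0}ᶜ : Set (EuclideanSpace ℝ (Fin N))),
      g x = gt (homeomorphUnitSphereProd (EuclideanSpace ℝ (Fin N)) x) := by
    intro x
    have hx : (x : EuclideanSpace ℝ (Fin N)) ≠ 0 := x.2
    simp only [hgt, homeomorphUnitSphereProd_apply_fst_coe,
      homeomorphUnitSphereProd_apply_snd_coe]
    rw [smul_inv_smul₀ (norm_ne_zero_iff.2 hx)]
  have h1 : Integrable (fun x : ({0}ᶜ : Set (EuclideanSpace ℝ (Fin N))) => g x)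
      ((volume : Measure (EuclideanSpace ℝ (Fin N))).comap Subtype.val) :=
    (integrable_comap_val_iff (measurableSet_singleton 0).compl
      hgm.aestronglyMeasurable.restrict).mpr hgi.integrableOn
  have mp := (volume : Measure (EuclideanSpace ℝ (Fin N))).measurePreserving_homeomorphUnitSphereProd
  have emb := (homeomorphUnitSphereProd (EuclideanSpace ℝ (Fin N))).measurableEmbedding
  have h2 : Integrable gt ((volume : Measure (EuclideanSpace ℝ (Fin N))).toSphere.prod
      (Measure.volumeIoiPow n)) := by
    rw [← mp.integrable_comp_emb emb]
    exact h1.congr (ae_of_all _ hkey)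
  have h3 : (∫ x, g x) = ∫ p, gt p ∂((volume : Measure (EuclideanSpace ℝ (Fin N))).toSphere.prod
      (Measure.volumeIoiPow n)) := by
    calc ∫ x, g x ∂(volume : Measure (EuclideanSpace ℝ (Fin N)))
        = ∫ x in ({0}ᶜ : Set (EuclideanSpace ℝ (Fin N))), g x := by
          rw [restrict_compl_singleton]
      _ = ∫ x : ({0}ᶜ : Set (EuclideanSpace ℝ (Fin N))), g x
            ∂((volume : Measure (EuclideanSpace ℝ (Fin N))).comap Subtype.val) :=
          (integral_subtype_comap (measurableSet_singleton 0).compl g).symm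
      _ = ∫ x : ({0}ᶜ : Set (EuclideanSpace ℝ (Fin N))),
            gt (homeomorphUnitSphereProd (EuclideanSpace ℝ (Fin N)) x)
            ∂((volume : Measure (EuclideanSpace ℝ (Fin N))).comap Subtype.val) :=
          integral_congr_ae (ae_of_all _ hkey)
      _ = _ := mp.integral_comp emb gt
  have h4 := integral_prod_symm gt h2
  have h5 := h2.integral_prod_right
  have meas_density : Measurable fun r : Ioi (0:ℝ) => ((r : ℝ) ^ n).toNNReal :=
    (measurable_subtype_coe.pow_const _).real_toNNReal
  simp only [Measure.volumeIoiPow, ENNReal.ofReal] at h4 h5 h3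
  rw [integral_withDensity_eq_integral_smul meas_density] at h4
  rw [integrable_withDensity_iff_integrable_smul meas_density] at h5
  have hslice : ∀ r : Ioi (0:ℝ),
      (∫ σ : sphere (0 : EuclideanSpace ℝ (Fin N)) 1, gt (σ, r)
        ∂(volume : Measure (EuclideanSpace ℝ (Fin N))).toSphere) = Φ (r : ℝ) := fun r => rfl
  have hFmeas : AEStronglyMeasurable (fun r : ℝ => (((r : ℝ) ^ n).toNNReal : ℝ≥0) • Φ r)
      ((volume : Measure ℝ).restrict (Ioi (0:ℝ))) := by
    refine AEStronglyMeasurable.smul ?_ hΦm.aestronglyMeasurable.restrict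
    refine Measurable.aestronglyMeasurable ?_
    fun_prop
  have h5' : IntegrableOn (fun r : ℝ => (((r : ℝ) ^ n).toNNReal : ℝ≥0) • Φ r) (Ioi (0:ℝ)) := by
    refine (integrable_comap_val_iff measurableSet_Ioi hFmeas).mp ?_
    simp only [hslice] at h5
    exact h5
  have heq : ∀ r ∈ Ioi (0:ℝ), (((r : ℝ) ^ n).toNNReal : ℝ≥0) • Φ r = r ^ (N - 1) * Φ r := by
    intro r hr
    rw [NNReal.smul_def, Real.coe_toNNReal _ (pow_nonneg (le_of_lt hr) _), smul_eq_mul, hn, hdim]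
  have h6 : (∫ x : ↑(Ioi (0:ℝ)), ((x : ℝ) ^ n).toNNReal •
      (∫ σ : sphere (0 : EuclideanSpace ℝ (Fin N)) 1, gt (σ, x)
        ∂(volume : Measure (EuclideanSpace ℝ (Fin N))).toSphere)
      ∂(Measure.comap Subtype.val (volume : Measure ℝ))) =
      ∫ r in Ioi (0:ℝ), (((r ^ n).toNNReal : ℝ≥0) • Φ r) :=
    integral_subtype_comap measurableSet_Ioi (fun r : ℝ => ((r ^ n).toNNReal : ℝ≥0) • Φ r)
  constructor
  · rw [h3, h4, h6]
    exact setIntegral_congr_fun measurableSet_Ioi heq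
  · exact h5'.congr_fun heq measurableSet_Ioi

lemma sphere_cont_integrable {N : ℕ} {h : sphere (0 : EuclideanSpace ℝ (Fin N)) 1 → ℝ}
    (hh : Continuous h) : Integrable h (sphereMeasure N) := by
  haveI : IsFiniteMeasure (sphereMeasure N) :=
    (inferInstance : IsFiniteMeasure ((volume : Measure (EuclideanSpace ℝ (Fin N))).toSphere))
  rcases isCompact_univ.exists_bound_of_continuousOn hh.continuousOn with ⟨C, hC⟩
  exact Integrable.mono' (integrable_const C) hh.aestronglyMeasurable
    (ae_of_all _ fun σ => hC σ trivial)

lemma hasDerivAt_sphereF {N : ℕ} {f : EuclideanSpace ℝ (Fin N) → ℝ}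
    (hf : ContDiff ℝ (⊤ : ℕ∞) f) (r₀ : ℝ) :
    HasDerivAt (fun r : ℝ => ∫ σ : sphere (0 : EuclideanSpace ℝ (Fin N)) 1,
        (f (r • (σ : EuclideanSpace ℝ (Fin N)))) ^ 2 ∂(sphereMeasure N))
      (∫ σ : sphere (0 : EuclideanSpace ℝ (Fin N)) 1,
        2 * f (r₀ • (σ : EuclideanSpace ℝ (Fin N))) *
          fderiv ℝ f (r₀ • (σ : EuclideanSpace ℝ (Fin N))) (σ : EuclideanSpace ℝ (Fin N))
        ∂(sphereMeasure N)) r₀ := by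
  haveI : IsFiniteMeasure (sphereMeasure N) :=
    (inferInstance : IsFiniteMeasure ((volume : Measure (EuclideanSpace ℝ (Fin N))).toSphere))
  have hfc : Continuous f := hf.continuous
  have hfd : Continuous (fderiv ℝ f) := hf.continuous_fderiv (by simp)
  set S := sphere (0 : EuclideanSpace ℝ (Fin N)) 1
  set φ' : ℝ → S → ℝ := fun t σ =>
    2 * f (t • (σ : EuclideanSpace ℝ (Fin N))) *
      fderiv ℝ f (t • (σ : EuclideanSpace ℝ (Fin N))) (σ : EuclideanSpace ℝ (Fin N)) with hφ'
  have hsm : Continuous fun p : ℝ × S => p.1 • (p.2 : EuclideanSpace ℝ (Fin N)) :=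
    continuous_fst.smul (continuous_subtype_val.comp continuous_snd)
  have hφ'c : Continuous fun p : ℝ × S => φ' p.1 p.2 := by
    exact (continuous_const.mul (hfc.comp hsm)).mul
      ((hfd.comp hsm).clm_apply (continuous_subtype_val.comp continuous_snd))
  obtain ⟨C, hC⟩ := ((isCompact_Icc (a := r₀ - 1) (b := r₀ + 1)).prod
    isCompact_univ).exists_bound_of_continuousOn hφ'c.continuousOn
  have key := hasDerivAt_integral_of_dominated_loc_of_deriv_le
    (F := fun t (σ : S) => (f (t • (σ : EuclideanSpace ℝ (Fin N)))) ^ 2) (F' := φ')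
    (bound := fun _ => C) (μ := sphereMeasure N) (x₀ := r₀) (s := ball r₀ 1) (ball_mem_nhds r₀ one_pos)
    (Eventually.of_forall fun t =>
      ((hfc.comp (continuous_subtype_val.const_smul t)).pow 2).aestronglyMeasurable)
    (sphere_cont_integrable ((hfc.comp (continuous_subtype_val.const_smul r₀)).pow 2))
    (hφ'c.comp (Continuous.prodMk_right r₀)).aestronglyMeasurable
    ?_ (integrable_const C) ?_
  · exact key.2
  · refine ae_of_all _ fun σ t ht => ?_
    have htI : t ∈ Icc (r₀ - 1) (r₀ + 1) := by
      rw [Real.ball_eq_Ioo] at ht; exact Ioo_subset_Icc_self ht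
    exact hC (t, σ) (Set.mk_mem_prod htI (mem_univ σ))
  · refine ae_of_all _ fun σ t _ => ?_
    have h1 : HasDerivAt (fun s : ℝ => s • (σ : EuclideanSpace ℝ (Fin N)))
        ((σ : EuclideanSpace ℝ (Fin N))) t := by
      simpa using (hasDerivAt_id t).smul_const (σ : EuclideanSpace ℝ (Fin N))
    have h2 : HasDerivAt (fun s => f (s • (σ : EuclideanSpace ℝ (Fin N))))
        (fderiv ℝ f (t • (σ : EuclideanSpace ℝ (Fin N))) (σ : EuclideanSpace ℝ (Fin N))) t :=
      ((hf.differentiable (by simp) _).hasFDerivAt).comp_hasDerivAt t h1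
    have h3 := h2.pow 2
    refine h3.congr_deriv ?_
    simp only [hφ', Nat.cast_ofNat, show 2 - 1 = 1 from rfl, pow_one]

lemma radDeriv_measurable {N : ℕ} {f : EuclideanSpace ℝ (Fin N) → ℝ}
    (hf : ContDiff ℝ (⊤ : ℕ∞) f) : Measurable (radDeriv f) := by
  have hfd : Continuous (fderiv ℝ f) := hf.continuous_fderiv (by simp)
  have h1 : Measurable fun x : EuclideanSpace ℝ (Fin N) => (‖x‖⁻¹ • x : EuclideanSpace ℝ (Fin N)) :=
    measurable_norm.inv.smul measurable_id
  exact (isBoundedBilinearMap_apply.continuous.measurable).comp (hfd.measurable.prodMk h1)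

lemma norm_smul_sphere {N : ℕ} {r : ℝ} (hr : 0 < r)
    (σ : sphere (0 : EuclideanSpace ℝ (Fin N)) 1) :
    ‖r • (σ : EuclideanSpace ℝ (Fin N))‖ = r := by
  rw [norm_smul, mem_sphere_zero_iff_norm.1 σ.2, Real.norm_eq_abs, abs_of_pos hr, mul_one]

lemma radDeriv_smul_sphere {N : ℕ} (f : EuclideanSpace ℝ (Fin N) → ℝ) {r : ℝ} (hr : 0 < r)
    (σ : sphere (0 : EuclideanSpace ℝ (Fin N)) 1) :
    radDeriv f (r • (σ : EuclideanSpace ℝ (Fin N))) =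
      fderiv ℝ f (r • (σ : EuclideanSpace ℝ (Fin N))) (σ : EuclideanSpace ℝ (Fin N)) := by
  rw [radDeriv, norm_smul_sphere hr σ, smul_smul, inv_mul_cancel₀ hr.ne', one_smul]

lemma lhs_pointwise {N ν : ℕ} {f : EuclideanSpace ℝ (Fin N) → ℝ}
    (hf : ContDiff ℝ (⊤ : ℕ∞) f) {x : EuclideanSpace ℝ (Fin N)} (hx : x ≠ 0) :
    (radDeriv (fun y => ‖y‖ ^ (-(ν : ℝ)) * f y) x) ^ 2 * ‖x‖ ^ (2 * ν) =
      (radDeriv f x) ^ 2 - 2 * ν * (f x * radDeriv f x * ‖x‖⁻¹) +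
        ν ^ 2 * ((‖x‖ ^ 2)⁻¹ * (f x) ^ 2) := by
  set g : EuclideanSpace ℝ (Fin N) → ℝ := fun y => ‖y‖ ^ (-(ν : ℝ)) * f y with hg
  have hr : (0:ℝ) < ‖x‖ := norm_pos_iff.2 hx
  set σ : EuclideanSpace ℝ (Fin N) := ‖x‖⁻¹ • x with hσdef
  have hσ : ‖σ‖ = 1 := by
    rw [hσdef, norm_smul, norm_inv, norm_norm, inv_mul_cancel₀ hr.ne']
  have hxσ : ‖x‖ • σ = x := smul_inv_smul₀ hr.ne' x
  have hdiff_f : Differentiable ℝ f := hf.differentiable (by simp)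
  have hgd : DifferentiableAt ℝ g x := by
    refine DifferentiableAt.mul ?_ (hdiff_f x)
    exact (((contDiffAt_norm ℝ hx (n := 1)).differentiableAt one_ne_zero)).rpow_const
      (Or.inl hr.ne')
  have hcurve : ∀ t : ℝ, HasDerivAt (fun s : ℝ => s • σ) σ t := fun t => by
    simpa using (hasDerivAt_id t).smul_const σ
  have h1 : HasDerivAt (fun t : ℝ => g (t • σ)) (fderiv ℝ g x σ) ‖x‖ := by
    have hgd2 : DifferentiableAt ℝ g (‖x‖ • σ) := by rw [hxσ]; exact hgd
    have h1' := (hgd2.hasFDerivAt).comp_hasDerivAt ‖x‖ (hcurve ‖x‖)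
    rw [hxσ] at h1'
    exact h1'
  have hfcurve : HasDerivAt (fun t : ℝ => f (t • σ)) (fderiv ℝ f x σ) ‖x‖ := by
    have := ((hdiff_f (‖x‖ • σ)).hasFDerivAt).comp_hasDerivAt ‖x‖ (hcurve ‖x‖)
    rwa [hxσ] at this
  have hrpow : HasDerivAt (fun t : ℝ => t ^ (-(ν:ℝ)))
      ((-(ν:ℝ)) * ‖x‖ ^ (-(ν:ℝ) - 1)) ‖x‖ := Real.hasDerivAt_rpow_const (Or.inl hr.ne')
  have h2 : HasDerivAt (fun t : ℝ => t ^ (-(ν:ℝ)) * f (t • σ))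
      ((-(ν:ℝ)) * ‖x‖ ^ (-(ν:ℝ) - 1) * f x + ‖x‖ ^ (-(ν:ℝ)) * fderiv ℝ f x σ) ‖x‖ := by
    have := hrpow.mul hfcurve
    rwa [hxσ] at this
  have heq : (fun t : ℝ => g (t • σ)) =ᶠ[nhds ‖x‖] (fun t : ℝ => t ^ (-(ν:ℝ)) * f (t • σ)) := by
    filter_upwards [Ioi_mem_nhds hr] with t ht
    have : ‖t • σ‖ = t := by
      rw [norm_smul, hσ, Real.norm_eq_abs, abs_of_pos ht, mul_one]
    rw [hg]; simp only [this]
  have h2' : HasDerivAt (fun t : ℝ => g (t • σ))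
      ((-(ν:ℝ)) * ‖x‖ ^ (-(ν:ℝ) - 1) * f x + ‖x‖ ^ (-(ν:ℝ)) * fderiv ℝ f x σ) ‖x‖ :=
    h2.congr_of_eventuallyEq heq
  have huniq : fderiv ℝ g x σ =
      (-(ν:ℝ)) * ‖x‖ ^ (-(ν:ℝ) - 1) * f x + ‖x‖ ^ (-(ν:ℝ)) * fderiv ℝ f x σ :=
    h1.unique h2'
  have hrad : radDeriv g x = (-(ν:ℝ)) * ‖x‖ ^ (-(ν:ℝ) - 1) * f x +
      ‖x‖ ^ (-(ν:ℝ)) * fderiv ℝ f x σ := by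
    rw [radDeriv, ← hσdef, huniq]
  have hradf : radDeriv f x = fderiv ℝ f x σ := by rw [radDeriv, ← hσdef]
  have hpow : (‖x‖ : ℝ) ^ (2 * ν) = (‖x‖ ^ ν) ^ 2 := by rw [mul_comm, pow_mul]
  have hνpow : (‖x‖ : ℝ) ^ ν = ‖x‖ ^ ((ν : ℝ)) := (Real.rpow_natCast _ _).symm
  have e1 : (‖x‖:ℝ) ^ (-(ν:ℝ) - 1) * ‖x‖ ^ ((ν:ℝ)) = ‖x‖⁻¹ := by
    rw [← Real.rpow_add hr, show -(ν:ℝ) - 1 + ν = -1 by ring, Real.rpow_neg_one]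
  have e2 : (‖x‖:ℝ) ^ (-(ν:ℝ)) * ‖x‖ ^ ((ν:ℝ)) = 1 := by
    rw [← Real.rpow_add hr, show -(ν:ℝ) + ν = 0 by ring, Real.rpow_zero]
  have hkey : radDeriv g x * ‖x‖ ^ ν = fderiv ℝ f x σ - (ν:ℝ) * ‖x‖⁻¹ * f x := by
    rw [hrad, hνpow]
    linear_combination (-(ν:ℝ) * f x) * e1 + (fderiv ℝ f x σ) * e2
  rw [hpow, ← mul_pow, hkey, hradf]
  have hinv : ((‖x‖:ℝ) ^ 2)⁻¹ = ‖x‖⁻¹ * ‖x‖⁻¹ := by rw [sq, mul_inv]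
  rw [hinv]
  ring

end helpers

/-- Integral identity for the transformation `f ↦ |x|^{-ν} f`:
`∫ (∂_r(|x|^{-ν}f))² |x|^{2ν} dx = ∫ ((∂_r f)² + ν(ν+N-2)|x|^{-2} f²) dx`. -/
theorem stmt_8 (N ν : ℕ) (hN : 3 ≤ N) (hν : 1 ≤ ν)
    (f : EuclideanSpace ℝ (Fin N) → ℝ)
    (hf : ContDiff ℝ (⊤ : ℕ∞) f)
    (hlim : Tendsto
      (fun R : ℝ => R ^ (N - 2) *
        ∫ σ : sphere (0 : EuclideanSpace ℝ (Fin N)) 1,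
          (f (R • (σ : EuclideanSpace ℝ (Fin N)))) ^ 2 ∂(sphereMeasure N))
      atTop (nhds 0))
    (hI1 : Integrable (fun x => (radDeriv f x) ^ 2) volume)
    (hI2 : Integrable (fun x => (‖x‖ ^ 2)⁻¹ * (f x) ^ 2) volume) :
    (∫ x, (radDeriv (fun y => ‖y‖ ^ (-(ν : ℝ)) * f y) x) ^ 2 * ‖x‖ ^ (2 * ν)) =
      ∫ x, ((radDeriv f x) ^ 2 +
        (ν : ℝ) * ((ν : ℝ) + (N : ℝ) - 2) * (‖x‖ ^ 2)⁻¹ * (f x) ^ 2) := by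
  haveI : Nonempty (Fin N) := ⟨⟨0, by omega⟩⟩
  have hfc : Continuous f := hf.continuous
  have hfm : Measurable f := hfc.measurable
  have hDm : Measurable (radDeriv f) := radDeriv_measurable hf
  set A : EuclideanSpace ℝ (Fin N) → ℝ := fun x => f x * radDeriv f x * ‖x‖⁻¹ with hA
  set B : EuclideanSpace ℝ (Fin N) → ℝ := fun x => (‖x‖ ^ 2)⁻¹ * (f x) ^ 2 with hB
  have hAm : Measurable A := (hfm.mul hDm).mul measurable_norm.inv
  have hBm : Measurable B := (measurable_norm.pow_const 2).inv.mul (hfm.pow_const 2)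
  have hB_int : Integrable B volume := hI2
  have hA_int : Integrable A volume := by
    refine Integrable.mono' ((hI1.add hB_int).const_mul (1/2)) hAm.aestronglyMeasurable
      (ae_of_all _ fun x => ?_)
    have hBx : B x = (‖x‖ ^ 2)⁻¹ * (f x) ^ 2 := rfl
    have e : ‖A x‖ = |radDeriv f x| * (|f x| * ‖x‖⁻¹) := by
      rw [hA]
      simp only [Real.norm_eq_abs, abs_mul, abs_inv, abs_norm]
      ring
    have h1 := two_mul_le_add_sq (|radDeriv f x|) (|f x| * ‖x‖⁻¹)
    have e2 : (|f x| * ‖x‖⁻¹) ^ 2 = (‖x‖ ^ 2)⁻¹ * (f x) ^ 2 := by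
      rw [mul_pow, sq_abs, inv_pow]
      ring
    rw [e]
    simp only [Pi.add_apply]
    nlinarith [sq_abs (radDeriv f x), h1, e2, hBx]
  set F : ℝ → ℝ := fun r => ∫ σ : sphere (0 : EuclideanSpace ℝ (Fin N)) 1,
    (f (r • (σ : EuclideanSpace ℝ (Fin N)))) ^ 2 ∂(sphereMeasure N) with hF
  set G : ℝ → ℝ := fun r => ∫ σ : sphere (0 : EuclideanSpace ℝ (Fin N)) 1,
    f (r • (σ : EuclideanSpace ℝ (Fin N))) *
      fderiv ℝ f (r • (σ : EuclideanSpace ℝ (Fin N))) (σ : EuclideanSpace ℝ (Fin N))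
    ∂(sphereMeasure N) with hG
  -- polar coordinates for B
  obtain ⟨hpB_eq, hpB_int⟩ := polar_aux hN hBm hB_int
  have hBσ : ∀ r ∈ Ioi (0:ℝ), r ^ (N - 1) *
      (∫ σ : sphere (0 : EuclideanSpace ℝ (Fin N)) 1, B (r • (σ : EuclideanSpace ℝ (Fin N)))
        ∂(sphereMeasure N)) = r ^ (N - 3) * F r := by
    intro r hr
    have h1 : ∀ σ : sphere (0 : EuclideanSpace ℝ (Fin N)) 1,
        B (r • (σ : EuclideanSpace ℝ (Fin N))) =
          (r ^ 2)⁻¹ * (f (r • (σ : EuclideanSpace ℝ (Fin N)))) ^ 2 := fun σ => by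
      rw [hB]; simp only; rw [norm_smul_sphere hr σ]
    simp only [h1]
    rw [integral_const_mul]
    have hpow : r ^ (N - 1) = r ^ (N - 3) * r ^ 2 := by
      rw [← pow_add]; congr 1; omega
    rw [hpow]
    have hFr : (∫ σ : sphere (0 : EuclideanSpace ℝ (Fin N)) 1,
        (f (r • (σ : EuclideanSpace ℝ (Fin N)))) ^ 2 ∂(sphereMeasure N)) = F r := rfl
    rw [hFr]
    have hr' : r ≠ 0 := ne_of_gt (mem_Ioi.1 hr)
    field_simp
  have hB_Ioi_eq : (∫ x, B x) = ∫ r in Ioi (0:ℝ), r ^ (N - 3) * F r :=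
    hpB_eq.trans (setIntegral_congr_fun measurableSet_Ioi hBσ)
  have hB_Ioi_int : IntegrableOn (fun r : ℝ => r ^ (N - 3) * F r) (Ioi (0:ℝ)) :=
    hpB_int.congr_fun hBσ measurableSet_Ioi
  -- polar coordinates for A
  obtain ⟨hpA_eq, hpA_int⟩ := polar_aux hN hAm hA_int
  have hAσ : ∀ r ∈ Ioi (0:ℝ), r ^ (N - 1) *
      (∫ σ : sphere (0 : EuclideanSpace ℝ (Fin N)) 1, A (r • (σ : EuclideanSpace ℝ (Fin N)))
        ∂(sphereMeasure N)) = r ^ (N - 2) * G r := by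
    intro r hr
    have h1 : ∀ σ : sphere (0 : EuclideanSpace ℝ (Fin N)) 1,
        A (r • (σ : EuclideanSpace ℝ (Fin N))) =
          (f (r • (σ : EuclideanSpace ℝ (Fin N))) *
            fderiv ℝ f (r • (σ : EuclideanSpace ℝ (Fin N))) (σ : EuclideanSpace ℝ (Fin N))) * r⁻¹ :=
      fun σ => by
        rw [hA]; simp only
        rw [radDeriv_smul_sphere f hr σ, norm_smul_sphere hr σ]
    simp only [h1]
    rw [integral_mul_const]
    have hGr : (∫ σ : sphere (0 : EuclideanSpace ℝ (Fin N)) 1,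
        f (r • (σ : EuclideanSpace ℝ (Fin N))) *
          fderiv ℝ f (r • (σ : EuclideanSpace ℝ (Fin N))) (σ : EuclideanSpace ℝ (Fin N))
        ∂(sphereMeasure N)) = G r := rfl
    rw [hGr]
    have hpow : r ^ (N - 1) = r ^ (N - 2) * r := by
      rw [← pow_succ]; congr 1; omega
    rw [hpow]
    have hr' : r ≠ 0 := ne_of_gt (mem_Ioi.1 hr)
    field_simp
  have hA_Ioi_eq : (∫ x, A x) = ∫ r in Ioi (0:ℝ), r ^ (N - 2) * G r :=
    hpA_eq.trans (setIntegral_congr_fun measurableSet_Ioi hAσ)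
  have hA_Ioi_int : IntegrableOn (fun r : ℝ => r ^ (N - 2) * G r) (Ioi (0:ℝ)) :=
    hpA_int.congr_fun hAσ measurableSet_Ioi
  -- derivative of F
  have hFderiv : ∀ r : ℝ, HasDerivAt F (2 * G r) r := by
    intro r
    have h := hasDerivAt_sphereF hf r
    have e : (∫ σ : sphere (0 : EuclideanSpace ℝ (Fin N)) 1,
        2 * f (r • (σ : EuclideanSpace ℝ (Fin N))) *
          fderiv ℝ f (r • (σ : EuclideanSpace ℝ (Fin N))) (σ : EuclideanSpace ℝ (Fin N))
        ∂(sphereMeasure N)) = 2 * G r := by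
      simp only [mul_assoc]
      rw [integral_const_mul]
      try rfl
    rw [e] at h
    exact h
  have hFcont : Continuous F := continuous_iff_continuousAt.2 fun r => (hFderiv r).continuousAt
  set H : ℝ → ℝ := fun r => r ^ (N - 2) * F r with hH
  have hH'deriv : ∀ r ∈ Ioi (0:ℝ), HasDerivAt H
      (((N:ℝ) - 2) * (r ^ (N - 3) * F r) + 2 * (r ^ (N - 2) * G r)) r := by
    intro r _
    have hp : HasDerivAt (fun s : ℝ => s ^ (N - 2)) (((N - 2 : ℕ):ℝ) * r ^ (N - 2 - 1)) r :=
      hasDerivAt_pow _ r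
    have hmul := hp.mul (hFderiv r)
    refine hmul.congr_deriv ?_
    have h32 : N - 2 - 1 = N - 3 := by omega
    rw [h32, Nat.cast_sub (by omega : 2 ≤ N)]
    try push_cast
    try ring
  have hHcont : ContinuousWithinAt H (Ici 0) 0 :=
    (((continuous_pow (N - 2)).mul hFcont).continuousAt).continuousWithinAt
  have hH'int : IntegrableOn
      (fun r : ℝ => ((N:ℝ) - 2) * (r ^ (N - 3) * F r) + 2 * (r ^ (N - 2) * G r)) (Ioi (0:ℝ)) :=
    (hB_Ioi_int.const_mul _).add (hA_Ioi_int.const_mul _)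
  have htop : Tendsto H atTop (nhds 0) := hlim
  have hint0 := integral_Ioi_of_hasDerivAt_of_tendsto hHcont hH'deriv hH'int htop
  have hH0 : H 0 = 0 := by
    rw [hH]; simp [zero_pow (show N - 2 ≠ 0 by omega)]
  have hsplit : (∫ r in Ioi (0:ℝ),
      (((N:ℝ) - 2) * (r ^ (N - 3) * F r) + 2 * (r ^ (N - 2) * G r))) =
      ((N:ℝ) - 2) * (∫ r in Ioi (0:ℝ), r ^ (N - 3) * F r) +
        2 * (∫ r in Ioi (0:ℝ), r ^ (N - 2) * G r) := by
    rw [integral_add (hB_Ioi_int.const_mul _) (hA_Ioi_int.const_mul _),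
      integral_const_mul, integral_const_mul]
  have hKEY : ((N:ℝ) - 2) * (∫ x, B x) + 2 * (∫ x, A x) = 0 := by
    rw [hB_Ioi_eq, hA_Ioi_eq, ← hsplit, hint0, hH0]
    ring
  -- almost everywhere nonzero
  have h0ae : ∀ᵐ x : EuclideanSpace ℝ (Fin N) ∂volume, x ≠ 0 := by
    refine ae_iff.mpr ?_
    simpa using measure_singleton (0 : EuclideanSpace ℝ (Fin N))
  have hLHS : (∫ x, (radDeriv (fun y => ‖y‖ ^ (-(ν : ℝ)) * f y) x) ^ 2 * ‖x‖ ^ (2 * ν)) =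
      ∫ x, ((radDeriv f x) ^ 2 - 2 * (ν:ℝ) * A x + (ν:ℝ) ^ 2 * B x) := by
    refine integral_congr_ae (h0ae.mono fun x hx => ?_)
    simp only [hA, hB]
    exact lhs_pointwise hf hx
  have hLHS2 : (∫ x, ((radDeriv f x) ^ 2 - 2 * (ν:ℝ) * A x + (ν:ℝ) ^ 2 * B x)) =
      (∫ x, (radDeriv f x) ^ 2) - 2 * (ν:ℝ) * (∫ x, A x) + (ν:ℝ) ^ 2 * (∫ x, B x) := by
    have h1' : Integrable (fun x => (radDeriv f x) ^ 2 - 2 * (ν:ℝ) * A x) volume :=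
      hI1.sub (hA_int.const_mul _)
    have h2' : Integrable (fun x => (ν:ℝ) ^ 2 * B x) volume := hB_int.const_mul _
    have h3' : Integrable (fun x => 2 * (ν:ℝ) * A x) volume := hA_int.const_mul _
    rw [integral_add h1' h2', integral_sub hI1 h3', integral_const_mul, integral_const_mul]
  have hRHS : (∫ x, ((radDeriv f x) ^ 2 +
      (ν : ℝ) * ((ν : ℝ) + (N : ℝ) - 2) * (‖x‖ ^ 2)⁻¹ * (f x) ^ 2)) =
      (∫ x, (radDeriv f x) ^ 2) + (ν : ℝ) * ((ν : ℝ) + (N : ℝ) - 2) * (∫ x, B x) := by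
    have e : ∀ x : EuclideanSpace ℝ (Fin N), (radDeriv f x) ^ 2 +
        (ν : ℝ) * ((ν : ℝ) + (N : ℝ) - 2) * (‖x‖ ^ 2)⁻¹ * (f x) ^ 2 =
        (radDeriv f x) ^ 2 + (ν : ℝ) * ((ν : ℝ) + (N : ℝ) - 2) * B x := fun x => by
      rw [hB]; ring
    simp only [e]
    rw [integral_add hI1 (hB_int.const_mul ((ν:ℝ) * ((ν:ℝ) + (N:ℝ) - 2))), integral_const_mul]
  rw [hLHS, hLHS2, hRHS]
  linear_combination (-(ν:ℝ)) * hKEY
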